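/- For a single Pauli-rotation data encoding, the model function f(x) = ⟨0| W₁† G(x)† W₂† O W₂ G(x) W₁ |0⟩ with G(x) = exp(−i x σ_z / 2) acting on one qubit (tensored with identity elsewhere) can be written as f(x) = c₀ + c₁ cos(x) + c₂ sin(x) for real constants c₀, c₁, c₂ independent of x. -/
import Mathlib


open Matrix Kronecker

/-- The single-qubit Pauli-Z rotation data-encoding gate `G(x) = exp(-i x σ_z / 2)`,
tensored with the identity on the remaining qubits. -/
noncomputable def encodingGate (m : ℕ) (x : ℝ) : Matrix (Fin 2 × Fin m) (Fin 2 × Fin m) ℂ :=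
  (!![Complex.exp (-Complex.I * x / 2), 0; 0, Complex.exp (Complex.I * x / 2)] :
      Matrix (Fin 2) (Fin 2) ℂ) ⊗ₖ (1 : Matrix (Fin m) (Fin m) ℂ)

/-- A single Pauli-rotation encoding yields a model of the form
`c₀ + c₁ cos x + c₂ sin x`. -/
theorem single_pauli_encoding_fourier (m : ℕ)
    (W₁ W₂ : Matrix (Fin 2 × Fin m) (Fin 2 × Fin m) ℂ)
    (hW₁ : W₁ ∈ Matrix.unitaryGroup (Fin 2 × Fin m) ℂ)
    (hW₂ : W₂ ∈ Matrix.unitaryGroup (Fin 2 × Fin m) ℂ)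
    (O : Matrix (Fin 2 × Fin m) (Fin 2 × Fin m) ℂ) (hO : O.IsHermitian)
    (ψ₀ : Fin 2 × Fin m → ℂ) :
    ∃ c₀ c₁ c₂ : ℝ, ∀ x : ℝ,
      star ψ₀ ⬝ᵥ
          ((W₁ᴴ * (encodingGate m x)ᴴ * W₂ᴴ * O * W₂ * encodingGate m x * W₁).mulVec ψ₀) =
        (c₀ : ℂ) + (c₁ : ℂ) * (Real.cos x : ℝ) + (c₂ : ℂ) * (Real.sin x : ℝ) := by
  classical
  set M : Matrix (Fin 2 × Fin m) (Fin 2 × Fin m) ℂ := W₂ᴴ * O * W₂ with hMdef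
  have hMH : Mᴴ = M := by
    simp only [hMdef, conjTranspose_mul, conjTranspose_conjTranspose, hO.eq]
    rw [Matrix.mul_assoc]
  have hM : ∀ j k, (starRingEnd ℂ) (M j k) = M k j := by
    intro j k
    have := congrFun (congrFun hMH k) j
    simpa [Matrix.conjTranspose_apply] using this
  set φ : Fin 2 × Fin m → ℂ := W₁.mulVec ψ₀ with hφ
  set t : (Fin 2 × Fin m) → (Fin 2 × Fin m) → ℂ :=
    fun j k => (starRingEnd ℂ) (φ j) * M j k * φ k with ht
  have htconj : ∀ j k, (starRingEnd ℂ) (t j k) = t k j := by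
    intro j k
    simp only [ht, _root_.map_mul, Complex.conj_conj, hM j k]
    ring
  set A : ℂ := ∑ a : Fin m, ∑ b : Fin m, (t (0,a) (0,b) + t (1,a) (1,b)) with hA
  set B : ℂ := ∑ a : Fin m, ∑ b : Fin m, t (0,a) (1,b) with hB
  have hAconj : (starRingEnd ℂ) A = A := by
    simp only [hA, map_sum, map_add, htconj]
    rw [Finset.sum_comm]
  have hAim : A.im = 0 := Complex.conj_eq_iff_im.mp hAconj
  have hC : (∑ a : Fin m, ∑ b : Fin m, t (1,a) (0,b)) = (starRingEnd ℂ) B := by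
    simp only [hB, map_sum, htconj]
    rw [Finset.sum_comm]
  refine ⟨A.re, 2*B.re, -2*B.im, fun x => ?_⟩
  set d : Fin 2 × Fin m → ℂ :=
    fun p => if p.1 = 0 then Complex.exp (-Complex.I * x / 2)
             else Complex.exp (Complex.I * x / 2) with hd
  have hD : encodingGate m x = Matrix.diagonal d := by
    ext ⟨i, a⟩ ⟨j, b⟩
    fin_cases i <;> fin_cases j <;>
      simp [encodingGate, Matrix.diagonal, Matrix.one_apply, hd, Prod.ext_iff] <;>
      split <;> simp_all
  have hN : ∀ j k, ((Matrix.diagonal d)ᴴ * M * Matrix.diagonal d) j k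
      = star (d j) * M j k * d k := by
    intro j k
    rw [Matrix.mul_assoc]
    simp [Matrix.diagonal_conjTranspose, Matrix.diagonal_mul, Matrix.mul_diagonal,
      mul_assoc]
  have hstep : W₁ᴴ * (encodingGate m x)ᴴ * W₂ᴴ * O * W₂ * encodingGate m x * W₁
      = W₁ᴴ * (((Matrix.diagonal d)ᴴ * M * Matrix.diagonal d) * W₁) := by
    rw [hD, hMdef]
    simp only [Matrix.mul_assoc]
  rw [hstep]
  have hdot : star ψ₀ ⬝ᵥ (W₁ᴴ * (((Matrix.diagonal d)ᴴ * M * Matrix.diagonal d) * W₁)).mulVec ψ₀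
      = star φ ⬝ᵥ ((Matrix.diagonal d)ᴴ * M * Matrix.diagonal d).mulVec φ := by
    rw [← Matrix.mulVec_mulVec, Matrix.dotProduct_mulVec, ← Matrix.star_mulVec, ← hφ,
      ← Matrix.mulVec_mulVec]
  rw [hdot]
  have hsum : star φ ⬝ᵥ ((Matrix.diagonal d)ᴴ * M * Matrix.diagonal d).mulVec φ
      = ∑ j : Fin 2 × Fin m, ∑ k : Fin 2 × Fin m, t j k * (star (d j) * d k) := by
    simp only [dotProduct, Matrix.mulVec, Finset.mul_sum]
    refine Finset.sum_congr rfl fun j _ => Finset.sum_congr rfl fun k _ => ?_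
    rw [hN]
    simp only [ht, Pi.star_apply, Complex.star_def]
    ring
  rw [hsum]
  -- values of the phase factors
  have hstar0 : star (Complex.exp (-Complex.I * x / 2)) = Complex.exp (Complex.I * x / 2) := by
    rw [Complex.star_def, ← Complex.exp_conj]
    congr 1
    simp [Complex.conj_ofReal, map_ofNat]
  have hstar1 : star (Complex.exp (Complex.I * x / 2)) = Complex.exp (-Complex.I * x / 2) := by
    rw [Complex.star_def, ← Complex.exp_conj]
    congr 1
    simp [Complex.conj_ofReal, map_ofNat]
  have hd0 : ∀ a : Fin m, d (0,a) = Complex.exp (-Complex.I * x / 2) := fun a => rfl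
  have hd1 : ∀ a : Fin m, d (1,a) = Complex.exp (Complex.I * x / 2) := fun a => rfl
  have e00 : ∀ a b : Fin m, star (d (0,a)) * d (0,b) = 1 := by
    intro a b
    show star (Complex.exp (-Complex.I * x / 2)) * Complex.exp (-Complex.I * x / 2) = 1
    rw [hstar0, ← Complex.exp_add,
      show Complex.I * (x:ℂ) / 2 + -Complex.I * (x:ℂ) / 2 = 0 by ring, Complex.exp_zero]
  have e11 : ∀ a b : Fin m, star (d (1,a)) * d (1,b) = 1 := by
    intro a b
    show star (Complex.exp (Complex.I * x / 2)) * Complex.exp (Complex.I * x / 2) = 1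
    rw [hstar1, ← Complex.exp_add,
      show -Complex.I * (x:ℂ) / 2 + Complex.I * (x:ℂ) / 2 = 0 by ring, Complex.exp_zero]
  have e01 : ∀ a b : Fin m, star (d (0,a)) * d (1,b) = Complex.exp (Complex.I * x) := by
    intro a b
    show star (Complex.exp (-Complex.I * x / 2)) * Complex.exp (Complex.I * x / 2) = _
    rw [hstar0, ← Complex.exp_add]
    congr 1
    ring
  have e10 : ∀ a b : Fin m, star (d (1,a)) * d (0,b) = Complex.exp (-(Complex.I * x)) := by
    intro a b
    show star (Complex.exp (Complex.I * x / 2)) * Complex.exp (-Complex.I * x / 2) = _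
    rw [hstar1, ← Complex.exp_add]
    congr 1
    ring
  have hsplit : (∑ j : Fin 2 × Fin m, ∑ k : Fin 2 × Fin m, t j k * (star (d j) * d k))
      = A + B * Complex.exp (Complex.I * x)
        + (starRingEnd ℂ) B * Complex.exp (-(Complex.I * x)) := by
    simp only [Fintype.sum_prod_type, Fin.sum_univ_two, e00, e01, e10, e11, mul_one]
    rw [hA, hB, ← hC]
    simp only [Finset.sum_add_distrib, Finset.sum_mul]
    ring
  rw [hsplit]
  have hEI : Complex.exp (Complex.I * x) = (Real.cos x : ℂ) + (Real.sin x : ℂ) * Complex.I := by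
    rw [mul_comm, Complex.exp_mul_I, ← Complex.ofReal_cos, ← Complex.ofReal_sin]
  have hEI' : Complex.exp (-(Complex.I * x))
      = (Real.cos x : ℂ) - (Real.sin x : ℂ) * Complex.I := by
    rw [show -(Complex.I * (x:ℂ)) = ((-x : ℝ) : ℂ) * Complex.I by push_cast; ring,
      Complex.exp_mul_I, ← Complex.ofReal_cos, ← Complex.ofReal_sin, Real.cos_neg,
      Real.sin_neg]
    push_cast
    ring
  rw [hEI, hEI']
  apply Complex.ext <;>
    simp [Complex.add_re, Complex.add_im, Complex.mul_re, Complex.mul_im, hAim] <;>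
    ring
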